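/- Suppose 0 ≤ γ < 1, c_k < γ y_k², and λ > (γ/(1-γ)) ‖x_k‖₂². Then c_k - y_k² + y_k² · x_kᵀ (λ I + x_k x_kᵀ)⁻¹ x_k < 0. -/

import Mathlib

open Matrix

theorem human_loss_lt {d : ℕ}
    (x : Fin d → ℝ) (y c γ lam : ℝ)
    (hγ0 : 0 ≤ γ) (hγ1 : γ < 1)
    (hlam0 : 0 < lam)
    (hc : c < γ * y ^ 2)
    (hlam : lam > γ / (1 - γ) * ∑ i, x i ^ 2) :
    c - y ^ 2 + y ^ 2 * (x ⬝ᵥ (lam • (1 : Matrix (Fin d) (Fin d) ℝ) + vecMulVec x x)⁻¹.mulVec x) < 0 := by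
  set s : ℝ := ∑ i, x i ^ 2 with hs_def
  have hxx : x ⬝ᵥ x = s := by simp [dotProduct, hs_def, sq]
  have hs0 : 0 ≤ s := Finset.sum_nonneg fun i _ => sq_nonneg _
  have hls : 0 < lam + s := by linarith
  set M : Matrix (Fin d) (Fin d) ℝ := lam • (1 : Matrix (Fin d) (Fin d) ℝ) + vecMulVec x x
    with hM_def
  have hmul : ∀ v : Fin d → ℝ, M *ᵥ v = lam • v + (x ⬝ᵥ v) • x := by
    intro v
    ext j
    simp [hM_def, mulVec, dotProduct, vecMulVec_apply, one_apply, mul_add,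
      Finset.sum_add_distrib, Finset.mul_sum, mul_ite, Finset.sum_ite_eq',
      mul_comm, mul_left_comm]
  have hposdef : M.PosDef := by
    rw [posDef_iff_dotProduct_mulVec]
    constructor
    · ext i j
      simp [hM_def, conjTranspose_apply, vecMulVec_apply, one_apply, mul_comm, eq_comm]
    · intro v hv
      rw [hmul]
      have hvv : 0 < v ⬝ᵥ v := by
        rcases lt_or_eq_of_le (Finset.sum_nonneg fun i _ => mul_self_nonneg (v i) :
            (0:ℝ) ≤ v ⬝ᵥ v) with h | h
        · exact h
        · exact absurd (dotProduct_self_eq_zero.mp h.symm) hv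
      have hxv : x ⬝ᵥ v = v ⬝ᵥ x := dotProduct_comm x v
      simp only [star_trivial, dotProduct_add, dotProduct_smul, smul_eq_mul]
      rw [hxv]
      nlinarith [mul_self_nonneg (v ⬝ᵥ x), mul_pos hlam0 hvv]
  haveI := hposdef.isUnit.invertible
  have h1 : M *ᵥ ((lam + s)⁻¹ • x) = x := by
    rw [mulVec_smul, hmul, hxx, ← add_smul, smul_smul, inv_mul_cancel₀ hls.ne', one_smul]
  have key : M⁻¹ *ᵥ x = (lam + s)⁻¹ • x := by
    calc M⁻¹ *ᵥ x = M⁻¹ *ᵥ (M *ᵥ ((lam + s)⁻¹ • x)) := by rw [h1]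
    _ = (M⁻¹ * M) *ᵥ ((lam + s)⁻¹ • x) := by rw [mulVec_mulVec]
    _ = (lam + s)⁻¹ • x := by
        rw [Matrix.nonsing_inv_mul M (Matrix.isUnit_det_of_invertible M), one_mulVec]
  rw [key, dotProduct_smul, smul_eq_mul, hxx]
  have h2 : (lam + s)⁻¹ * s ≤ 1 - γ := by
    rw [← div_eq_inv_mul, div_le_iff₀ hls]
    have hγ1' : (0:ℝ) < 1 - γ := by linarith
    have h3 : γ * s < lam * (1 - γ) := by
      rw [div_mul_eq_mul_div] at hlam
      exact (div_lt_iff₀ hγ1').mp hlam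
    nlinarith
  nlinarith [mul_le_mul_of_nonneg_left h2 (sq_nonneg y)]
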